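/- In the Lorentzian warped product g = -dt² + w²ḡ on ℝ × N with k = ∂_t + k̄/w and T = ∇t = -∂_t, the twist function of k with respect to g satisfies ι = ῑ/w, where ῑ is the twist function of k̄ in (N, ḡ), computed in the frames x = x̄/w, y = ȳ/w for an orthonormal frame x̄, ȳ of k̄^⊥ in N. -/

import Mathlib

/-- Abstract data of a semi-Riemannian manifold `M`: a module `V` of vector
fields over the ring of smooth functions `M → ℝ`, a metric `g`, a Lie bracket,
a Levi-Civita connection `conn` and directional derivative `D`, satisfying the
usual axioms (bilinearity, Leibniz rule, metric compatibility,
torsion-freeness, and the bracket identity for derivatives). -/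
structure CovariantData (M : Type*) (V : Type*) [AddCommGroup V]
    [Module (M → ℝ) V] where
  g : V → V → M → ℝ
  bracket : V → V → V
  conn : V → V → V
  D : V → (M → ℝ) → M → ℝ
  g_symm : ∀ X Y, g X Y = g Y X
  g_addLeft : ∀ X Y Z, g (X + Y) Z = g X Z + g Y Z
  g_smulLeft : ∀ (f : M → ℝ) (X Y : V), g (f • X) Y = f * g X Y
  conn_addLeft : ∀ X Y Z, conn (X + Y) Z = conn X Z + conn Y Z
  conn_addRight : ∀ X Y Z, conn X (Y + Z) = conn X Y + conn X Z
  conn_smulLeft : ∀ (f : M → ℝ) (X Y : V), conn (f • X) Y = f • conn X Y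
  leibniz : ∀ (X : V) (f : M → ℝ) (Y : V),
    conn X (f • Y) = (D X f) • Y + f • conn X Y
  D_add : ∀ (X : V) (f h : M → ℝ), D X (f + h) = D X f + D X h
  D_const : ∀ (X : V) (c : ℝ), D X (fun _ => c) = 0
  compat : ∀ X Y Z, D X (g Y Z) = g (conn X Y) Z + g Y (conn X Z)
  torsion_free : ∀ X Y, conn X Y - conn Y X = bracket X Y
  D_bracket : ∀ X Y f, D X (D Y f) - D Y (D X f) = D (bracket X Y) f

/-- In the Lorentzian warped product `g = -dt² + w²ḡ` on `ℝ × N`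
with `k = ∂t + k̄/w`, the twist function of `k`, computed in the frame
`x = x̄/w, y = ȳ/w` (lifts of an orthonormal frame `x̄, ȳ` of `k̄^⊥` in `N`),
satisfies `ι = g(k,[x,y]) = ῑ/w`, where `ῑ = ḡ(k̄,[x̄,ȳ])` is the twist
function of `k̄` in `(N,ḡ)`. Here `brxy` denotes the lift of `[x̄,ȳ]`. -/
theorem stmt12 {N V : Type*} [AddCommGroup V] [Module (ℝ × N → ℝ) V]
    (d : CovariantData (ℝ × N) V) (et kbar xbar ybar brxy : V)
    (w : ℝ → ℝ) (iotabar : N → ℝ)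
    (hw : ∀ t : ℝ, 0 < w t)
    -- brackets of fiber lifts are lifts of the fiber bracket:
    (hbr : d.bracket xbar ybar = brxy)
    -- the warped metric on the relevant pairs (`ḡ(k̄,[x̄,ȳ]) = ῑ`):
    (hkbr : d.g kbar brxy = fun p => (w p.1) ^ 2 * iotabar p.2)
    (htbr : d.g et brxy = 0)
    -- `w` depends only on `t`, lifts are vertical:
    (hDx : d.D xbar (fun p : ℝ × N => 1 / w p.1) = 0)
    (hDy : d.D ybar (fun p : ℝ × N => 1 / w p.1) = 0) :
    ∀ p : ℝ × N,
      d.g (et + (fun q : ℝ × N => 1 / w q.1) • kbar)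
        (d.bracket ((fun q : ℝ × N => 1 / w q.1) • xbar)
          ((fun q : ℝ × N => 1 / w q.1) • ybar)) p
        = iotabar p.2 / w p.1 := by
  classical
  set f : ℝ × N → ℝ := fun q : ℝ × N => 1 / w q.1 with hf
  have hbr2 : d.bracket (f • xbar) (f • ybar) = (f * f) • brxy := by
    have h1 : d.conn (f • xbar) (f • ybar) = f • ((d.D xbar f) • ybar + f • d.conn xbar ybar) := by
      rw [d.conn_smulLeft, d.leibniz]
    have h2 : d.conn (f • ybar) (f • xbar) = f • ((d.D ybar f) • xbar + f • d.conn ybar xbar) := by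
      rw [d.conn_smulLeft, d.leibniz]
    have := d.torsion_free (f • xbar) (f • ybar)
    rw [h1, h2, hDx, hDy] at this
    simp only [zero_smul, zero_add] at this
    rw [← this, smul_smul, smul_smul, ← smul_sub]
    rw [show d.conn xbar ybar - d.conn ybar xbar = d.bracket xbar ybar from d.torsion_free _ _, hbr]
  intro p
  have key : d.g (et + f • kbar) (d.bracket (f • xbar) (f • ybar))
      = d.g et ((f * f) • brxy) + d.g kbar (f • ((f * f) • brxy)) := by
    rw [hbr2, d.g_addLeft, d.g_smulLeft]
    rw [d.g_symm kbar (f • (f * f) • brxy), d.g_smulLeft, d.g_symm]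
    ring_nf
    rw [d.g_symm]
  rw [key]
  have h3 : d.g et ((f * f) • brxy) = (f * f) * d.g et brxy := by
    rw [d.g_symm, d.g_smulLeft, d.g_symm]
  have h4 : d.g kbar (f • (f * f) • brxy) = (f * (f * f)) * d.g kbar brxy := by
    rw [smul_smul, d.g_symm, d.g_smulLeft, d.g_symm]
  simp only [h3, h4, htbr, hkbr, Pi.mul_apply, Pi.zero_apply, mul_zero, zero_add]
  have hwp := hw p.1
  field_simp [hf]
  simp only [hf, one_div, inv_pow]
  rw [inv_mul_cancel₀ (pow_ne_zero _ hwp.ne'), one_mul]
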